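/- Let T follow the double Pareto distribution with density as in Eq. (DP) (parameters λ, μ̃, σ, S₀). For a natural number m with m μ̃ + m² σ²/2 < λ, the m-th moment equals ∫₀^∞ x^m f(x) dx = λ S₀^m/(λ - m μ̃ - m² σ²/2); equivalently, the moment is finite if and only if m < α = (-μ̃ + √(μ̃²+2σ²λ))/σ². -/

import Mathlib

open MeasureTheory Real Set Filter

/-- Modified Bessel function of the second kind, via its integral representation. -/
noncomputable def besselK (ν z : ℝ) : ℝ :=
  2 ^ (ν - 1) * ∫ t in Set.Ioi (0:ℝ), t ^ (ν - 1) * Real.exp (-z * t - z / (4 * t))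

/-- Lognormal density with parameters m (log-mean) and v (log-variance). -/
noncomputable def lognormalPdf (m v x : ℝ) : ℝ :=
  (1 / (Real.sqrt (2 * π * v) * x)) * Real.exp (-(Real.log x - m) ^ 2 / (2 * v))

set_option maxHeartbeats 1000000 in
theorem stmt11 (lam S₀ μt σ : ℝ) (hlam : 0 < lam) (hS : 0 < S₀) (hσ : 0 < σ) (m : ℕ) :
    let α := (-μt + Real.sqrt (μt ^ 2 + 2 * σ ^ 2 * lam)) / σ ^ 2
    let β := (μt + Real.sqrt (μt ^ 2 + 2 * σ ^ 2 * lam)) / σ ^ 2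
    let C := lam / (S₀ * Real.sqrt (μt ^ 2 + 2 * σ ^ 2 * lam))
    let f : ℝ → ℝ := fun x =>
      if S₀ ≤ x then C * (x / S₀) ^ (-α - 1) else C * (x / S₀) ^ (β - 1)
    ((m : ℝ) * μt + (m : ℝ) ^ 2 * σ ^ 2 / 2 < lam →
        ∫ x in Set.Ioi (0:ℝ), x ^ m * f x =
          lam * S₀ ^ m / (lam - (m : ℝ) * μt - (m : ℝ) ^ 2 * σ ^ 2 / 2)) ∧
      (IntegrableOn (fun x => x ^ m * f x) (Set.Ioi 0) ↔ (m : ℝ) < α) := by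
  intro α β C f
  have hαdef : α = (-μt + Real.sqrt (μt ^ 2 + 2 * σ ^ 2 * lam)) / σ ^ 2 := rfl
  have hβdef : β = (μt + Real.sqrt (μt ^ 2 + 2 * σ ^ 2 * lam)) / σ ^ 2 := rfl
  have hCdef : C = lam / (S₀ * Real.sqrt (μt ^ 2 + 2 * σ ^ 2 * lam)) := rfl
  have hfdef : f = fun x =>
      if S₀ ≤ x then C * (x / S₀) ^ (-α - 1) else C * (x / S₀) ^ (β - 1) := rfl
  set sq := Real.sqrt (μt ^ 2 + 2 * σ ^ 2 * lam) with hsqdef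
  have hD : (0:ℝ) < μt ^ 2 + 2 * σ ^ 2 * lam := by positivity
  have hsq2 : sq ^ 2 = μt ^ 2 + 2 * σ ^ 2 * lam := Real.sq_sqrt hD.le
  have hsqpos : 0 < sq := Real.sqrt_pos.mpr hD
  have hσ2 : (0:ℝ) < σ ^ 2 := by positivity
  have habs : |μt| < sq := by
    rw [hsqdef, ← Real.sqrt_sq_eq_abs]
    exact Real.sqrt_lt_sqrt (sq_nonneg _) (by nlinarith [mul_pos hσ2 hlam])
  clear_value sq α β C f
  have hmu1 : -sq < μt := (abs_lt.mp habs).1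
  have hmu2 : μt < sq := (abs_lt.mp habs).2
  have hm0 : (0:ℝ) ≤ (m:ℝ) := Nat.cast_nonneg m
  have hβpos : 0 < β := by rw [hβdef]; exact div_pos (by linarith) hσ2
  have hαpos : 0 < α := by rw [hαdef]; exact div_pos (by linarith) hσ2
  have hCpos : 0 < C := by rw [hCdef]; exact div_pos hlam (mul_pos hS hsqpos)
  -- the key equivalence between the two finiteness conditions
  have hiff : ((m:ℝ) < α ↔ (m:ℝ) * μt + (m:ℝ) ^ 2 * σ ^ 2 / 2 < lam) := by
    rw [hαdef, lt_div_iff₀ hσ2]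
    constructor
    · intro h
      have h1 : (0:ℝ) < sq - ((m:ℝ) * σ ^ 2 + μt) := by linarith
      have h2 : (0:ℝ) < sq + ((m:ℝ) * σ ^ 2 + μt) := by nlinarith
      nlinarith [mul_pos h1 h2]
    · intro h
      have ha2 : ((m:ℝ) * σ ^ 2 + μt) ^ 2 < sq ^ 2 := by nlinarith
      nlinarith
  -- pointwise descriptions of the integrand on the two pieces
  have hpow : ∀ (r x : ℝ), 0 < x →
      x ^ m * (C * (x / S₀) ^ r) = (C / S₀ ^ r) * x ^ ((m:ℝ) + r) := by
    intro r x hx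
    rw [Real.div_rpow hx.le hS.le, Real.rpow_add hx, ← Real.rpow_natCast x m]
    ring
  have hf₁ : ∀ x ∈ Ioc (0:ℝ) S₀,
      x ^ m * f x = (C / S₀ ^ (β - 1)) * x ^ ((m:ℝ) + (β - 1)) := by
    intro x hx
    have hfx : f x = C * (x / S₀) ^ (β - 1) := by
      rw [hfdef]; dsimp only
      rcases le_or_gt S₀ x with h | h
      · have hxS : x = S₀ := le_antisymm hx.2 h
        rw [if_pos h, hxS, div_self hS.ne', Real.one_rpow, Real.one_rpow]
      · rw [if_neg (not_le.mpr h)]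
    rw [hfx, hpow _ _ hx.1]
  have hf₂ : ∀ x ∈ Ioi S₀,
      x ^ m * f x = (C / S₀ ^ (-α - 1)) * x ^ ((m:ℝ) + (-α - 1)) := by
    intro x hx
    have hx0 : 0 < x := hS.trans hx
    have hfx : f x = C * (x / S₀) ^ (-α - 1) := by
      rw [hfdef]; dsimp only; rw [if_pos (le_of_lt hx)]
    rw [hfx, hpow _ _ hx0]
  -- integrability on the two pieces
  have he₁ : (-1:ℝ) < (m:ℝ) + (β - 1) := by linarith
  have hint₁ : IntegrableOn (fun x => x ^ m * f x) (Ioc 0 S₀) := by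
    have h1 : IntegrableOn (fun x : ℝ => x ^ ((m:ℝ) + (β - 1))) (Ioc 0 S₀) :=
      (intervalIntegrable_iff_integrableOn_Ioc_of_le hS.le).mp
        (intervalIntegral.intervalIntegrable_rpow' he₁)
    exact IntegrableOn.congr_fun (h1.const_mul _) (fun x hx => (hf₁ x hx).symm) measurableSet_Ioc
  have hint₂ : (m:ℝ) < α → IntegrableOn (fun x => x ^ m * f x) (Ioi S₀) := by
    intro hm
    have h1 : IntegrableOn (fun x : ℝ => x ^ ((m:ℝ) + (-α - 1))) (Ioi S₀) :=
      (integrableOn_Ioi_rpow_iff hS).mpr (by linarith)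
    exact IntegrableOn.congr_fun (h1.const_mul _) (fun x hx => (hf₂ x hx).symm) measurableSet_Ioi
  have hdisj : Disjoint (Ioc (0:ℝ) S₀) (Ioi S₀) :=
    Set.disjoint_left.mpr fun x hx hx' => absurd hx.2 (not_le.mpr hx')
  constructor
  · intro hm'
    have hm : (m:ℝ) < α := hiff.mpr hm'
    rw [← Ioc_union_Ioi_eq_Ioi hS.le,
      setIntegral_union hdisj measurableSet_Ioi hint₁ (hint₂ hm)]
    have e₁val : ∫ x in Ioc (0:ℝ) S₀, x ^ m * f x
        = (C / S₀ ^ (β - 1)) * (S₀ ^ ((m:ℝ) + β) / ((m:ℝ) + β)) := by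
      rw [setIntegral_congr_fun measurableSet_Ioc hf₁, MeasureTheory.integral_const_mul,
        ← intervalIntegral.integral_of_le hS.le,
        integral_rpow (Or.inl he₁)]
      rw [Real.zero_rpow (by linarith : (m:ℝ) + (β - 1) + 1 ≠ 0),
        show (m:ℝ) + (β - 1) + 1 = (m:ℝ) + β by ring]
      ring
    have e₂val : ∫ x in Ioi S₀, x ^ m * f x
        = (C / S₀ ^ (-α - 1)) * (S₀ ^ ((m:ℝ) + -α) / (α - (m:ℝ))) := by
      rw [setIntegral_congr_fun measurableSet_Ioi hf₂, MeasureTheory.integral_const_mul,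
        integral_Ioi_rpow_of_lt (by linarith) hS]
      rw [show (m:ℝ) + (-α - 1) + 1 = (m:ℝ) + -α by ring]
      have hαm : α - (m:ℝ) ≠ 0 := by linarith
      have hαm' : (m:ℝ) + -α ≠ 0 := by
        intro h; apply hαm; linarith
      field_simp
      ring
    rw [e₁val, e₂val]
    -- now pure algebra
    have hSm : ∀ a : ℝ, S₀ ^ ((m:ℝ) + a) / S₀ ^ (a - 1) = S₀ * S₀ ^ m := by
      intro a
      rw [← Real.rpow_sub hS,
        show (m:ℝ) + a - (a - 1) = ((m + 1 : ℕ) : ℝ) by push_cast; ring,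
        Real.rpow_natCast, pow_succ]
      ring
    have t1 : (C / S₀ ^ (β - 1)) * (S₀ ^ ((m:ℝ) + β) / ((m:ℝ) + β))
        = C * (S₀ * S₀ ^ m) / ((m:ℝ) + β) := by
      rw [← hSm β]; ring
    have t2 : (C / S₀ ^ (-α - 1)) * (S₀ ^ ((m:ℝ) + -α) / (α - (m:ℝ)))
        = C * (S₀ * S₀ ^ m) / (α - (m:ℝ)) := by
      rw [← hSm (-α)]; ring
    rw [t1, t2]
    have key : ((m:ℝ) + β) * (α - (m:ℝ)) * σ ^ 2
        = 2 * (lam - (m:ℝ) * μt - (m:ℝ) ^ 2 * σ ^ 2 / 2) := by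
      rw [hαdef, hβdef]
      field_simp
      linear_combination hsq2
    have key2 : α + β = 2 * sq / σ ^ 2 := by
      rw [hαdef, hβdef]; ring
    have hd1 : (0:ℝ) < (m:ℝ) + β := by linarith
    have hd2 : (0:ℝ) < α - (m:ℝ) := by linarith
    have hd3 : (0:ℝ) < lam - (m:ℝ) * μt - (m:ℝ) ^ 2 * σ ^ 2 / 2 := by linarith
    have hsum : C * (S₀ * S₀ ^ m) / ((m:ℝ) + β) + C * (S₀ * S₀ ^ m) / (α - (m:ℝ))
        = C * (S₀ * S₀ ^ m) * (α + β) / (((m:ℝ) + β) * (α - (m:ℝ))) := by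
      field_simp
      ring
    have keyd : ((m:ℝ) + β) * (α - (m:ℝ))
        = 2 * (lam - (m:ℝ) * μt - (m:ℝ) ^ 2 * σ ^ 2 / 2) / σ ^ 2 := by
      rw [eq_div_iff hσ2.ne']; exact key
    rw [hsum, key2, keyd, hCdef]
    rw [div_eq_div_iff (by positivity) hd3.ne']
    field_simp
  · constructor
    · intro h
      have h2 : IntegrableOn (fun x => x ^ m * f x) (Ioi S₀) :=
        h.mono (Ioi_subset_Ioi hS.le) le_rfl
      have h3 : IntegrableOn
          (fun x : ℝ => (C / S₀ ^ (-α - 1)) * x ^ ((m:ℝ) + (-α - 1))) (Ioi S₀) :=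
        IntegrableOn.congr_fun h2 (fun x hx => hf₂ x hx) measurableSet_Ioi
      have hc : (C / S₀ ^ (-α - 1)) ≠ 0 :=
        div_ne_zero hCpos.ne' (Real.rpow_pos_of_pos hS _).ne'
      have h4 : IntegrableOn (fun x : ℝ => x ^ ((m:ℝ) + (-α - 1))) (Ioi S₀) :=
        (integrable_const_mul_iff (isUnit_iff_ne_zero.mpr hc) _).mp h3
      have := (integrableOn_Ioi_rpow_iff hS).mp h4
      linarith
    · intro hm
      have h := hint₁.union (hint₂ hm)
      rwa [Ioc_union_Ioi_eq_Ioi hS.le] at h
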